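/- arXiv:2003.05590 — 4 statements merged into one kernel-verified Lean document; each statement's English description precedes it below -/
import Mathlib

section
/- The map Q^{-1} defined by Q^{-1}(q)(u) = ∫₀ᵘ |q(y)| q(y) dy is a two-sided inverse of the square root velocity transform Q, where Q(c)(u) = c'(u)/√|c'(u)| when c'(u) ≠ 0 and Q(c)(u) = 0 otherwise, as a map from absolutely continuous curves c : [0,1] → ℝᵈ with c(0) = 0 to L²([0,1], ℝᵈ). -/
open MeasureTheory Set

/-- The square root velocity transform applied to the derivative `g` of a curve:
`srv g u = g u / √|g u|` (which is `0` when `g u = 0`). -/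
noncomputable def srv {E : Type*} [NormedAddCommGroup E] [NormedSpace ℝ E]
    (g : ℝ → E) (u : ℝ) : E := (Real.sqrt ‖g u‖)⁻¹ • g u

lemma srv_left_inv {E : Type*} [NormedAddCommGroup E] [NormedSpace ℝ E]
    (g : ℝ → E) (y : ℝ) : ‖srv g y‖ • srv g y = g y := by
  by_cases h : g y = 0
  · simp [srv, h]
  · have hn : (0:ℝ) < ‖g y‖ := norm_pos_iff.mpr h
    have hs : (0:ℝ) < Real.sqrt ‖g y‖ := Real.sqrt_pos.mpr hn
    have hnorm : ‖srv g y‖ = Real.sqrt ‖g y‖ := by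
      rw [srv, norm_smul, Real.norm_eq_abs, abs_of_pos (inv_pos.mpr hs),
        inv_mul_eq_div, eq_comm, eq_div_iff hs.ne', Real.mul_self_sqrt hn.le]
    rw [hnorm, srv, smul_smul, mul_inv_cancel₀ hs.ne', one_smul]

lemma srv_right_inv {E : Type*} [NormedAddCommGroup E] [NormedSpace ℝ E]
    (q : ℝ → E) (u : ℝ) : srv (fun y => ‖q y‖ • q y) u = q u := by
  by_cases h : q u = 0
  · simp [srv, h]
  · have hn : (0:ℝ) < ‖q u‖ := norm_pos_iff.mpr h
    have hsq : ‖‖q u‖ • q u‖ = ‖q u‖ * ‖q u‖ := by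
      rw [norm_smul, Real.norm_eq_abs, abs_of_pos hn]
    simp only [srv, hsq, Real.sqrt_mul_self hn.le, smul_smul,
      inv_mul_cancel₀ hn.ne', one_smul]

/-- The map `Q⁻¹(q)(u) = ∫₀ᵘ |q(y)| q(y) dy` is a two-sided inverse of the SRV transform `Q`
from absolutely continuous curves `c : [0,1] → ℝᵈ` with `c 0 = 0` (encoded via an integrable
derivative `g` with `c u = ∫₀ᵘ g`) to `L²([0,1], ℝᵈ)`. -/
theorem srv_two_sided_inverse (d : ℕ) :
    (∀ c g : ℝ → EuclideanSpace ℝ (Fin d),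
      IntegrableOn g (Icc 0 1) →
      c 0 = 0 →
      (∀ u ∈ Icc (0:ℝ) 1, c u = ∫ y in (0:ℝ)..u, g y) →
      ∀ u ∈ Icc (0:ℝ) 1, (∫ y in (0:ℝ)..u, ‖srv g y‖ • srv g y) = c u) ∧
    (∀ q : ℝ → EuclideanSpace ℝ (Fin d),
      MemLp q 2 (volume.restrict (Icc (0:ℝ) 1)) →
      ∀ᵐ u ∂(volume.restrict (Icc (0:ℝ) 1)),
        srv (fun y => ‖q y‖ • q y) u = q u) := by
  constructor
  · intro c g _ _ hc u hu
    simp only [srv_left_inv]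
    exact (hc u hu).symm
  · intro q _
    filter_upwards with u using srv_right_inv q u
end

section
/- If a Riemannian metric G on the space of smooth immersed curves satisfies the reparametrization invariance G_c(h, k) = G_{c∘γ}(h∘γ, k∘γ) for all γ ∈ Diff₊(D), then for any path of curves c(t, u) decomposed as c(t, u) = c^{hor}(t, γ(t, u)) with c^{hor} horizontal, the length satisfies L_G(c^{hor}) ≤ L_G(c). -/
open Set

/-- An orientation-preserving smooth reparametrization of `[0,1]`. -/
def IsReparam (γ : ℝ → ℝ) : Prop :=
  ContDiffOn ℝ (⊤ : ℕ∞) γ (Icc 0 1) ∧ γ 0 = 0 ∧ γ 1 = 1 ∧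
  StrictMonoOn γ (Icc 0 1) ∧ MapsTo γ (Icc 0 1) (Icc 0 1)

/-- If a (weak) Riemannian metric `G` on the space of curves is reparametrization
invariant, `G_c(h,k) = G_{c∘γ}(h∘γ, k∘γ)`, then for any path of curves decomposed as
`c(t,u) = c^hor(t, γ(t,u))` with `c^hor` horizontal (its time-velocity `G`-orthogonal to
the vertical space `{a • ∂_u c^hor}`), the length satisfies `L_G(c^hor) ≤ L_G(c)`.
Here `ct` is the time-derivative of `c`, decomposed via the chain rule as
`∂_t c = ∂_t c^hor ∘ γ + ∂_t γ • (∂_u c^hor ∘ γ)`, and `b` is `∂_t γ` transported through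
`γ`. -/
theorem horizontal_part_shorter {E : Type*} [NormedAddCommGroup E] [NormedSpace ℝ E]
    (G : (ℝ → E) → (ℝ → E) → (ℝ → E) → ℝ)
    (hsymm : ∀ c h k, G c h k = G c k h)
    (hadd : ∀ c h₁ h₂ k, G c (h₁ + h₂) k = G c h₁ k + G c h₂ k)
    (hsmul : ∀ c (r : ℝ) h k, G c (r • h) k = r * G c h k)
    (hpos : ∀ c h, 0 ≤ G c h h)
    (hinv : ∀ c h k γ, IsReparam γ → G c h k = G (c ∘ γ) (h ∘ γ) (k ∘ γ))
    (chor cthor cuhor : ℝ → ℝ → E) (γ γt b : ℝ → ℝ → ℝ) (c ct : ℝ → ℝ → E)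
    (hγ : ∀ t, IsReparam (γ t))
    (hc : ∀ t u, c t u = chor t (γ t u))
    (hct : ∀ t u, ct t u = cthor t (γ t u) + γt t u • cuhor t (γ t u))
    (hb : ∀ t u, b t (γ t u) = γt t u)
    (hhor : ∀ t (a : ℝ → ℝ), G (chor t) (cthor t) (fun u => a u • cuhor t u) = 0)
    (hint1 : IntervalIntegrable
      (fun t => Real.sqrt (G (chor t) (cthor t) (cthor t))) MeasureTheory.volume 0 1)
    (hint2 : IntervalIntegrable
      (fun t => Real.sqrt (G (c t) (ct t) (ct t))) MeasureTheory.volume 0 1) :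
    ∫ t in (0:ℝ)..1, Real.sqrt (G (chor t) (cthor t) (cthor t))
      ≤ ∫ t in (0:ℝ)..1, Real.sqrt (G (c t) (ct t) (ct t)) := by
  apply intervalIntegral.integral_mono_on (by norm_num) hint1 hint2
  intro t _
  apply Real.sqrt_le_sqrt
  set h := cthor t with hh
  set k : ℝ → E := fun u => b t u • cuhor t u with hk
  have hceq : c t = chor t ∘ γ t := funext fun u => hc t u
  have hcteq : ct t = (h + k) ∘ γ t := by
    funext u
    simp only [hk, hh, Function.comp, Pi.add_apply, hct t u, hb t u]
  have key : G (c t) (ct t) (ct t) = G (chor t) (h + k) (h + k) := by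
    rw [hceq, hcteq, ← hinv _ _ _ _ (hγ t)]
  have hGhk : G (chor t) h k = 0 := hhor t (b t)
  have hGkh : G (chor t) k h = 0 := by rw [hsymm]; exact hGhk
  have hGkk : 0 ≤ G (chor t) k k := hpos _ _
  have expand : G (chor t) (h + k) (h + k) =
      G (chor t) h h + G (chor t) h k + (G (chor t) k h + G (chor t) k k) := by
    rw [hadd, hsymm _ h (h + k), hadd, hsymm _ h h, hsymm _ k (h + k), hadd,
      hsymm _ k h, hsymm _ k k]
  rw [key, expand, hGhk, hGkh]
  linarith
end

section
/- Let c : [0,1] → ℝᵈ be absolutely continuous with c'(u) ≠ 0 almost everywhere, and let γ ∈ Diff̄₊([0,1]) (absolutely continuous, nondecreasing, γ(0)=0, γ(1)=1). Then c ∘ γ is absolutely continuous and the L² distance between SRV transforms satisfies ‖Q(c ∘ γ)‖_{L²} = ‖Q(c)‖_{L²}, i.e., composition with a generalized reparametrization preserves the length of the curve. -/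
open MeasureTheory Set

noncomputable def srvClamp (y : ℝ) : ℝ := min (max y 0) 1

lemma srvClamp_mem (y : ℝ) : srvClamp y ∈ Icc (0:ℝ) 1 :=
  ⟨le_min (le_max_right _ _) zero_le_one, min_le_right _ _⟩

lemma srvClamp_eq {y : ℝ} (hy : y ∈ Icc (0:ℝ) 1) : srvClamp y = y := by
  simp [srvClamp, max_eq_left hy.1, min_eq_left hy.2]

lemma srvClamp_mono : Monotone srvClamp := fun a b hab => by
  exact min_le_min (max_le_max hab le_rfl) le_rfl

lemma srvClamp_continuous : Continuous srvClamp :=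
  ((continuous_id.max continuous_const).min continuous_const)

noncomputable def srvGam (k : ℝ → ℝ) (y : ℝ) : ℝ := ∫ t in (0:ℝ)..(srvClamp y), k t

variable {k : ℝ → ℝ}

lemma srvII (hki : IntegrableOn k (Icc 0 1)) {a b : ℝ} (ha : 0 ≤ a) (hb : b ≤ 1)
    (hab : a ≤ b) : IntervalIntegrable k volume a b := by
  rw [intervalIntegrable_iff_integrableOn_Ioc_of_le hab]
  exact hki.mono_set (Ioc_subset_Icc_self.trans (Icc_subset_Icc ha hb))

lemma srvF_mono (hki : IntegrableOn k (Icc 0 1)) (h0 : ∀ y, 0 ≤ k y)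
    {a b : ℝ} (ha : a ∈ Icc (0:ℝ) 1) (hb : b ∈ Icc (0:ℝ) 1) (hab : a ≤ b) :
    (∫ t in (0:ℝ)..a, k t) ≤ ∫ t in (0:ℝ)..b, k t := by
  have h1 : IntervalIntegrable k volume 0 a := srvII hki le_rfl ha.2 ha.1
  have h2 : IntervalIntegrable k volume a b := srvII hki ha.1 hb.2 hab
  have h3 := intervalIntegral.integral_add_adjacent_intervals h1 h2
  have h4 : 0 ≤ ∫ t in a..b, k t :=
    intervalIntegral.integral_nonneg hab (fun u _ => h0 u)
  linarith

lemma srvGam_eq {y : ℝ} (hy : y ∈ Icc (0:ℝ) 1) : srvGam k y = ∫ t in (0:ℝ)..y, k t := by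
  rw [srvGam, srvClamp_eq hy]

lemma srvGam_zero : srvGam k 0 = 0 := by
  rw [srvGam_eq (by norm_num), intervalIntegral.integral_same]

lemma srvGam_mono (hki : IntegrableOn k (Icc 0 1)) (h0 : ∀ y, 0 ≤ k y) :
    Monotone (srvGam k) := fun a b hab =>
  srvF_mono hki h0 (srvClamp_mem a) (srvClamp_mem b) (srvClamp_mono hab)

lemma srvGam_continuous (hki : IntegrableOn k (Icc 0 1)) : Continuous (srvGam k) := by
  have h1 : ContinuousOn (fun x => ∫ t in Ioc (0:ℝ) x, k t) (Icc 0 1) :=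
    intervalIntegral.continuousOn_primitive hki
  have h2 : ContinuousOn (fun x => ∫ t in (0:ℝ)..x, k t) (Icc 0 1) := by
    refine ContinuousOn.congr h1 (fun x hx => ?_)
    rw [intervalIntegral.integral_of_le hx.1]
  exact h2.comp_continuous srvClamp_continuous srvClamp_mem

lemma srv_lint (hki : IntegrableOn k (Icc 0 1)) (h0 : ∀ y, 0 ≤ k y) {s : ℝ}
    (hs : s ∈ Icc (0:ℝ) 1) :
    ∫⁻ y in Icc 0 s, ENNReal.ofReal (k y) = ENNReal.ofReal (∫ t in (0:ℝ)..s, k t) := by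
  have hint : IntegrableOn k (Icc 0 s) := hki.mono_set (Icc_subset_Icc le_rfl hs.2)
  rw [intervalIntegral.integral_of_le hs.1, ← integral_Icc_eq_integral_Ioc,
    ofReal_integral_eq_lintegral_ofReal hint
      (Filter.Eventually.of_forall (fun y => h0 y))]

lemma srv_finite (hki : IntegrableOn k (Icc 0 1)) {u : ℝ} (hu : u ∈ Icc (0:ℝ) 1) :
    IsFiniteMeasure ((volume.restrict (Icc 0 u)).withDensity
      fun y => ENNReal.ofReal (k y)) := by
  constructor
  rw [withDensity_apply _ MeasurableSet.univ, Measure.restrict_univ]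
  calc ∫⁻ y, ENNReal.ofReal (k y) ∂(volume.restrict (Icc 0 u))
      ≤ ∫⁻ y, (‖k y‖₊ : ENNReal) ∂(volume.restrict (Icc 0 u)) := by
        refine lintegral_mono (fun y => ?_)
        rw [← enorm_eq_nnnorm, Real.enorm_eq_ofReal_abs]
        exact ENNReal.ofReal_le_ofReal (le_abs_self _)
    _ ≤ ∫⁻ y, (‖k y‖₊ : ENNReal) ∂(volume.restrict (Icc 0 1)) :=
        lintegral_mono' (Measure.restrict_mono (Icc_subset_Icc le_rfl hu.2) le_rfl) le_rfl
    _ < ⊤ := hki.2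

lemma srv_map (hm : Measurable k) (hki : IntegrableOn k (Icc 0 1)) (h0 : ∀ y, 0 ≤ k y)
    {u : ℝ} (hu : u ∈ Icc (0:ℝ) 1) :
    Measure.map (srvGam k) ((volume.restrict (Icc 0 u)).withDensity
      fun y => ENNReal.ofReal (k y)) = volume.restrict (Icc 0 (srvGam k u)) := by
  set γ := srvGam k with hγdef
  have hγc : Continuous γ := srvGam_continuous hki
  have hγm : Monotone γ := srvGam_mono hki h0
  have hγ0 : γ 0 = 0 := srvGam_zero
  set ν := (volume.restrict (Icc 0 u)).withDensity fun y => ENNReal.ofReal (k y) with hνdef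
  haveI : IsFiniteMeasure ν := srv_finite hki hu
  haveI : IsFiniteMeasure (ν.map γ) := Measure.isFiniteMeasure_map ν γ
  have hγu0 : 0 ≤ γ u := hγ0 ▸ hγm hu.1
  have hν : ∀ S : Set ℝ, MeasurableSet S →
      ν S = ∫⁻ y in S ∩ Icc 0 u, ENNReal.ofReal (k y) := by
    intro S hS
    rw [hνdef, withDensity_apply _ hS, Measure.restrict_restrict hS]
  refine Measure.ext_of_Iic (ν.map γ) _ (fun t => ?_)
  rw [Measure.map_apply hγc.measurable measurableSet_Iic,
    Measure.restrict_apply measurableSet_Iic,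
    hν _ (hγc.measurable measurableSet_Iic)]
  rcases lt_or_ge t 0 with ht | ht
  · have h1 : γ ⁻¹' Iic t ∩ Icc 0 u = ∅ := by
      ext y
      simp only [mem_inter_iff, mem_preimage, mem_Iic, mem_empty_iff_false, iff_false, not_and]
      intro hyt hy
      have : (0:ℝ) ≤ γ y := hγ0 ▸ hγm hy.1
      linarith
    have h2 : Iic t ∩ Icc 0 (γ u) = ∅ := by
      ext y
      simp only [mem_inter_iff, mem_Iic, mem_Icc, mem_empty_iff_false, iff_false, not_and]
      intro hyt hy0 _
      exact absurd (hy0.trans hyt) (not_le.2 ht)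
    rw [h1, h2]
    simp
  · rcases le_or_gt (γ u) t with htu | htu
    · have h1 : γ ⁻¹' Iic t ∩ Icc 0 u = Icc 0 u := by
        refine inter_eq_right.2 (fun y hy => ?_)
        have : γ y ≤ γ u := hγm hy.2
        exact le_trans this htu
      have h2 : Iic t ∩ Icc 0 (γ u) = Icc 0 (γ u) := by
        refine inter_eq_right.2 (fun y hy => le_trans hy.2 htu)
      rw [h1, h2, srv_lint hki h0 hu, Real.volume_Icc, sub_zero, ← srvGam_eq hu]
    · -- 0 ≤ t < γ u
      set A := γ ⁻¹' Iic t ∩ Icc 0 u with hAdef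
      have hune : (0:ℝ) ∈ A := ⟨by simpa [hγ0] using ht, le_rfl, hu.1⟩
      have hAbdd : BddAbove A := (bddAbove_Icc).mono inter_subset_right
      set s := sSup A with hsdef
      have hs_mem : ∀ y ∈ A, y ≤ s := fun y hy => le_csSup hAbdd hy
      have hs0 : 0 ≤ s := hs_mem 0 hune
      have hsu : s ≤ u := csSup_le ⟨0, hune⟩ (fun y hy => hy.2.2)
      have hγs_le : γ s ≤ t := by
        have hclosed : IsClosed (γ ⁻¹' Iic t) := isClosed_Iic.preimage hγc
        have : s ∈ closure A := (isLUB_csSup ⟨0, hune⟩ hAbdd).mem_closure ⟨0, hune⟩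
        have : s ∈ γ ⁻¹' Iic t :=
          hclosed.closure_subset (closure_mono inter_subset_left this)
        exact this
      have hγs : γ s = t := by
        by_contra hne
        have hlt : γ s < t := lt_of_le_of_ne hγs_le hne
        have hsu' : s < u := by
          rcases eq_or_lt_of_le hsu with h | h
          · exact absurd (h ▸ hlt) (not_lt.2 htu.le)
          · exact h
        have hopen : IsOpen {y | γ y < t} := isOpen_lt hγc continuous_const
        rcases Metric.isOpen_iff.1 hopen s hlt with ⟨ε, hε, hball⟩
        set y := min u (s + ε / 2) with hydef
        have hy1 : s < y := lt_min hsu' (by linarith)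
        have hy2 : y ∈ Metric.ball s ε := by
          rw [Real.ball_eq_Ioo]
          constructor
          · linarith
          · have : y ≤ s + ε / 2 := min_le_right _ _
            linarith
        have hy3 : γ y < t := hball hy2
        have hy4 : y ∈ A := ⟨le_of_lt hy3, le_trans hs0 hy1.le, min_le_left _ _⟩
        exact absurd (hs_mem y hy4) (not_le.2 hy1)
      have hA : A = Icc 0 s := by
        apply Subset.antisymm
        · intro y hy
          exact ⟨hy.2.1, hs_mem y hy⟩
        · intro y hy
          refine ⟨le_trans (hγm hy.2) (le_of_eq hγs), hy.1, le_trans hy.2 hsu⟩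
      have hsmem : s ∈ Icc (0:ℝ) 1 := ⟨hs0, hsu.trans hu.2⟩
      have h2 : Iic t ∩ Icc 0 (γ u) = Icc 0 t := by
        ext y
        simp only [mem_inter_iff, mem_Iic, mem_Icc]
        constructor
        · rintro ⟨h1, h2, h3⟩; exact ⟨h2, h1⟩
        · rintro ⟨h1, h2⟩; exact ⟨h2, h1, h2.trans htu.le⟩
      rw [hA, h2, srv_lint hki h0 hsmem, ← srvGam_eq hsmem, Real.volume_Icc, sub_zero]
      exact congrArg ENNReal.ofReal hγs

lemma srv_subst {E : Type*} [NormedAddCommGroup E] [NormedSpace ℝ E]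
    (hm : Measurable k) (hki : IntegrableOn k (Icc 0 1)) (h0 : ∀ y, 0 ≤ k y)
    {f : ℝ → E} (hf : StronglyMeasurable f) {u : ℝ} (hu : u ∈ Icc (0:ℝ) 1) :
    ∫ y in Icc 0 u, k y • f (srvGam k y) = ∫ t in Icc 0 (srvGam k u), f t := by
  have hγmeas : Measurable (srvGam k) := (srvGam_continuous hki).measurable
  have h1 : (∫ t in Icc 0 (srvGam k u), f t)
      = ∫ t, f t ∂(Measure.map (srvGam k) ((volume.restrict (Icc 0 u)).withDensity
        fun y => ENNReal.ofReal (k y))) := by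
    rw [srv_map hm hki h0 hu]
  rw [h1, integral_map hγmeas.aemeasurable hf.aestronglyMeasurable]
  have h2 : (fun y => ENNReal.ofReal (k y))
      = fun y => ((fun y => (k y).toNNReal) y : ENNReal) := rfl
  rw [h2, integral_withDensity_eq_integral_smul (hm.real_toNNReal)]
  refine integral_congr_ae (Filter.Eventually.of_forall (fun y => ?_))
  show k y • f (srvGam k y) = (k y).toNNReal • f (srvGam k y)
  rw [NNReal.smul_def, Real.coe_toNNReal _ (h0 y)]

lemma srv_subst_integrable {E : Type*} [NormedAddCommGroup E] [NormedSpace ℝ E]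
    (hm : Measurable k) (hki : IntegrableOn k (Icc 0 1)) (h0 : ∀ y, 0 ≤ k y)
    {f : ℝ → E} (hf : StronglyMeasurable f) {u : ℝ} (hu : u ∈ Icc (0:ℝ) 1)
    (hfi : IntegrableOn f (Icc 0 (srvGam k u))) :
    IntegrableOn (fun y => k y • f (srvGam k y)) (Icc 0 u) := by
  have hγmeas : Measurable (srvGam k) := (srvGam_continuous hki).measurable
  have h3 : ∀ y : ℝ, k y • f (srvGam k y) = (k y).toNNReal • f (srvGam k y) := by
    intro y
    rw [NNReal.smul_def, Real.coe_toNNReal _ (h0 y)]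
  rw [IntegrableOn, funext h3,
    ← integrable_withDensity_iff_integrable_smul (hm.real_toNNReal)]
  have h2 : (fun y => ((fun y => (k y).toNNReal) y : ENNReal))
      = fun y => ENNReal.ofReal (k y) := rfl
  rw [h2]
  have h4 : Integrable (f ∘ srvGam k) ((volume.restrict (Icc 0 u)).withDensity
      fun y => ENNReal.ofReal (k y)) := by
    rw [← integrable_map_measure hf.aestronglyMeasurable hγmeas.aemeasurable,
      srv_map hm hki h0 hu]
    exact hfi
  exact h4

lemma srv_null (hm : Measurable k) (hki : IntegrableOn k (Icc 0 1)) (h0 : ∀ y, 0 ≤ k y)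
    {N : Set ℝ} (hNm : MeasurableSet N) (hN : volume (N ∩ Icc 0 (srvGam k 1)) = 0) :
    ∀ᵐ y ∂(volume.restrict (Icc (0:ℝ) 1)), srvGam k y ∈ N → k y = 0 := by
  have h1mem : (1:ℝ) ∈ Icc (0:ℝ) 1 := ⟨zero_le_one, le_rfl⟩
  have hγmeas : Measurable (srvGam k) := (srvGam_continuous hki).measurable
  have hpre : MeasurableSet (srvGam k ⁻¹' N) := hγmeas hNm
  have h2 : ((volume.restrict (Icc (0:ℝ) 1)).withDensity
      fun y => ENNReal.ofReal (k y)) (srvGam k ⁻¹' N) = 0 := by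
    have h5 : (Measure.map (srvGam k) ((volume.restrict (Icc (0:ℝ) 1)).withDensity
        fun y => ENNReal.ofReal (k y))) N = 0 := by
      rw [srv_map hm hki h0 h1mem, Measure.restrict_apply hNm]
      exact hN
    rw [Measure.map_apply hγmeas hNm] at h5
    exact h5
  rw [withDensity_apply _ hpre] at h2
  have h2' := (setLIntegral_eq_zero_iff hpre hm.ennreal_ofReal).1 h2
  filter_upwards [h2'] with y hy hyN
  have := hy hyN
  rw [ENNReal.ofReal_eq_zero] at this
  exact le_antisymm this (h0 y)

lemma norm_srv_sq {E : Type*} [NormedAddCommGroup E] [NormedSpace ℝ E]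
    (g : ℝ → E) (u : ℝ) : ‖srv g u‖ ^ 2 = ‖g u‖ := by
  by_cases hgu : g u = 0
  · simp [srv, hgu]
  · have hn : 0 < ‖g u‖ := norm_pos_iff.2 hgu
    have hs : 0 < Real.sqrt ‖g u‖ := Real.sqrt_pos.2 hn
    rw [srv, norm_smul, Real.norm_eq_abs, abs_inv, abs_of_pos hs, mul_pow, inv_pow,
      Real.sq_sqrt hn.le]
    field_simp

/-- Let `c : [0,1] → ℝᵈ` be absolutely continuous (with derivative `g`) with `c' ≠ 0`
a.e., and let `γ ∈ Diff̄₊([0,1])` be a generalized reparametrization (absolutely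
continuous with density `k ≥ 0` a.e., `γ 0 = 0`, `γ 1 = 1`). Then `c ∘ γ` is absolutely
continuous with derivative `k • (g ∘ γ)` a.e., and the L² norm of the SRV transform is
preserved: `‖Q(c ∘ γ)‖_{L²} = ‖Q(c)‖_{L²}` (the length of the curve is unchanged). -/
theorem srv_norm_invariant_gen_reparam (d : ℕ)
    (c g : ℝ → EuclideanSpace ℝ (Fin d)) (γ k : ℝ → ℝ)
    (hg : IntegrableOn g (Icc 0 1))
    (hc : ∀ u ∈ Icc (0:ℝ) 1, c u = c 0 + ∫ y in (0:ℝ)..u, g y)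
    (hgne : ∀ᵐ u ∂(volume.restrict (Icc (0:ℝ) 1)), g u ≠ 0)
    (hk : IntegrableOn k (Icc 0 1))
    (hknn : ∀ᵐ u ∂(volume.restrict (Icc (0:ℝ) 1)), 0 ≤ k u)
    (hγ0 : γ 0 = 0) (hγ1 : γ 1 = 1)
    (hγ : ∀ u ∈ Icc (0:ℝ) 1, γ u = ∫ y in (0:ℝ)..u, k y) :
    ∃ h : ℝ → EuclideanSpace ℝ (Fin d),
      IntegrableOn h (Icc 0 1) ∧
      (∀ u ∈ Icc (0:ℝ) 1, c (γ u) = c (γ 0) + ∫ y in (0:ℝ)..u, h y) ∧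
      (∀ᵐ u ∂(volume.restrict (Icc (0:ℝ) 1)), h u = k u • g (γ u)) ∧
      ∫ u in (0:ℝ)..1, ‖srv h u‖ ^ 2 = ∫ u in (0:ℝ)..1, ‖srv g u‖ ^ 2 := by
  have h1mem : (1:ℝ) ∈ Icc (0:ℝ) 1 := ⟨zero_le_one, le_rfl⟩
  -- measurable nonnegative version of k
  obtain ⟨k₀, hk₀m, hk₀e⟩ : ∃ k₀, Measurable k₀ ∧ k =ᵐ[volume.restrict (Icc (0:ℝ) 1)] k₀ :=
    ⟨hk.aemeasurable.mk k, hk.aemeasurable.measurable_mk, hk.aemeasurable.ae_eq_mk⟩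
  set kt : ℝ → ℝ := fun y => max (k₀ y) 0 with hktdef
  have hktm : Measurable kt := hk₀m.max measurable_const
  have hkt0 : ∀ y, 0 ≤ kt y := fun y => le_max_right _ _
  have hkte : k =ᵐ[volume.restrict (Icc (0:ℝ) 1)] kt := by
    filter_upwards [hk₀e, hknn] with y h1 h2
    rw [hktdef]
    simp only [← h1]
    exact (max_eq_left h2).symm
  have hkti : IntegrableOn kt (Icc 0 1) := hk.congr hkte
  -- measurable version of g
  obtain ⟨gt, hgtm, hgte⟩ : ∃ gt, StronglyMeasurable gt ∧
      g =ᵐ[volume.restrict (Icc (0:ℝ) 1)] gt :=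
    ⟨hg.aestronglyMeasurable.mk g, hg.aestronglyMeasurable.stronglyMeasurable_mk,
      hg.aestronglyMeasurable.ae_eq_mk⟩
  have hgti : IntegrableOn gt (Icc 0 1) := hg.congr hgte
  -- the modified reparametrization
  have hγ'm : Monotone (srvGam kt) := srvGam_mono hkti hkt0
  have hγ'0 : srvGam kt 0 = 0 := srvGam_zero
  have hγγ' : ∀ u ∈ Icc (0:ℝ) 1, γ u = srvGam kt u := by
    intro u hu
    rw [hγ u hu, srvGam_eq hu]
    apply intervalIntegral.integral_congr_ae
    have hae : ∀ᵐ x ∂volume, x ∈ Icc (0:ℝ) 1 → k x = kt x :=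
      (ae_restrict_iff' measurableSet_Icc).1 hkte
    filter_upwards [hae] with x hx hxI
    rw [Set.uIoc_of_le hu.1] at hxI
    exact hx ⟨hxI.1.le, hxI.2.trans hu.2⟩
  have hγ'1 : srvGam kt 1 = 1 := by rw [← hγγ' 1 h1mem]; exact hγ1
  have hγ'mem : ∀ u ∈ Icc (0:ℝ) 1, srvGam kt u ∈ Icc (0:ℝ) 1 := fun u hu =>
    ⟨hγ'0 ▸ hγ'm hu.1, hγ'1 ▸ hγ'm hu.2⟩
  refine ⟨fun y => kt y • gt (srvGam kt y), ?_, ?_, ?_, ?_⟩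
  · -- integrability
    refine srv_subst_integrable hktm hkti hkt0 hgtm h1mem ?_
    rw [hγ'1]
    exact hgti
  · -- FTC
    intro u hu
    have hγu_mem : γ u ∈ Icc (0:ℝ) 1 := (hγγ' u hu) ▸ hγ'mem u hu
    rw [hγ0, hc (γ u) hγu_mem]
    congr 1
    have key : ∫ y in Icc 0 u, kt y • gt (srvGam kt y)
        = ∫ t in Icc 0 (srvGam kt u), gt t :=
      srv_subst hktm hkti hkt0 hgtm hu
    have hγu0 : 0 ≤ γ u := hγu_mem.1
    have hsub : Icc (0:ℝ) (srvGam kt u) ⊆ Icc (0:ℝ) 1 :=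
      Icc_subset_Icc le_rfl (hγ'mem u hu).2
    have hcongr : ∫ t in Icc 0 (srvGam kt u), gt t = ∫ t in Icc 0 (srvGam kt u), g t := by
      have hg' : g =ᵐ[volume.restrict (Icc 0 (srvGam kt u))] gt :=
        ae_restrict_of_ae_restrict_of_subset hsub hgte
      exact integral_congr_ae hg'.symm
    rw [intervalIntegral.integral_of_le hγu0, ← integral_Icc_eq_integral_Ioc,
      intervalIntegral.integral_of_le hu.1, ← integral_Icc_eq_integral_Ioc,
      key, hcongr, hγγ' u hu]
  · -- a.e. identity
    set m := volume.restrict (Icc (0:ℝ) 1) with hmdef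
    set N := toMeasurable m {x | g x ≠ gt x} with hNdef
    have hNmeas : MeasurableSet N := measurableSet_toMeasurable _ _
    have hmN : m N = 0 := by
      rw [hNdef, measure_toMeasurable]
      exact hgte
    have hvolN : volume (N ∩ Icc 0 (srvGam kt 1)) = 0 := by
      rw [hγ'1, ← Measure.restrict_apply hNmeas]
      exact hmN
    have e3 := srv_null hktm hkti hkt0 hNmeas hvolN
    filter_upwards [hkte, e3, ae_restrict_mem measurableSet_Icc] with y h1 h2 hymem
    rw [h1, hγγ' y hymem]
    by_cases hk0 : kt y = 0
    · simp [hk0]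
    · have hnotN : srvGam kt y ∉ N := fun hmem => hk0 (h2 hmem)
      have : g (srvGam kt y) = gt (srvGam kt y) := by
        by_contra hne
        exact hnotN (subset_toMeasurable m _ hne)
      rw [this]
  · -- length preservation
    have step1 : ∫ u in (0:ℝ)..1, ‖srv (fun y => kt y • gt (srvGam kt y)) u‖ ^ 2
        = ∫ u in (0:ℝ)..1, ‖kt u • gt (srvGam kt u)‖ :=
      intervalIntegral.integral_congr (fun x _ => norm_srv_sq _ x)
    have step2 : ∫ u in (0:ℝ)..1, ‖srv g u‖ ^ 2 = ∫ u in (0:ℝ)..1, ‖g u‖ :=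
      intervalIntegral.integral_congr (fun x _ => norm_srv_sq _ x)
    rw [step1, step2]
    have hpt2 : ∀ y : ℝ, ‖kt y • gt (srvGam kt y)‖ = kt y • ‖gt (srvGam kt y)‖ := fun y => by
      rw [norm_smul, Real.norm_eq_abs, abs_of_nonneg (hkt0 y), smul_eq_mul]
    have key : ∫ y in Icc 0 1, kt y • ‖gt (srvGam kt y)‖
        = ∫ t in Icc 0 (srvGam kt 1), ‖gt t‖ :=
      srv_subst hktm hkti hkt0 hgtm.norm h1mem
    have hcongr : ∫ t in Icc (0:ℝ) 1, ‖gt t‖ = ∫ t in Icc (0:ℝ) 1, ‖g t‖ := by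
      refine integral_congr_ae ?_
      filter_upwards [hgte] with t ht
      rw [ht]
    rw [intervalIntegral.integral_of_le zero_le_one, ← integral_Icc_eq_integral_Ioc,
      intervalIntegral.integral_of_le zero_le_one, ← integral_Icc_eq_integral_Ioc]
    calc ∫ y in Icc (0:ℝ) 1, ‖kt y • gt (srvGam kt y)‖
        = ∫ y in Icc (0:ℝ) 1, kt y • ‖gt (srvGam kt y)‖ := by simp_rw [hpt2]
      _ = ∫ t in Icc 0 (srvGam kt 1), ‖gt t‖ := key
      _ = ∫ t in Icc (0:ℝ) 1, ‖gt t‖ := by rw [hγ'1]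
      _ = ∫ t in Icc (0:ℝ) 1, ‖g t‖ := hcongr
end

section
/- The group Diff₊([0,1]) of orientation-preserving smooth diffeomorphisms fixing the endpoints is dense in the monoid Diff̄₊([0,1]) of absolutely continuous nondecreasing surjections of [0,1] fixing the endpoints, with respect to the topology induced by the map γ ↦ √(γ') ∈ L²([0,1], ℝ). -/
open MeasureTheory Set
open scoped ENNReal NNReal
private lemma sqrt_add_le' {a d : ℝ} (ha : 0 ≤ a) (hd : 0 ≤ d) :
    Real.sqrt (a + d) ≤ Real.sqrt a + Real.sqrt d := by
  have h1 : a + d ≤ (Real.sqrt a + Real.sqrt d) ^ 2 := by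
    have := Real.sq_sqrt ha; have := Real.sq_sqrt hd
    nlinarith [Real.sqrt_nonneg a, Real.sqrt_nonneg d, mul_nonneg (Real.sqrt_nonneg a) (Real.sqrt_nonneg d)]
  calc Real.sqrt (a + d) ≤ Real.sqrt ((Real.sqrt a + Real.sqrt d) ^ 2) := Real.sqrt_le_sqrt h1
    _ = Real.sqrt a + Real.sqrt d := Real.sqrt_sq (by positivity)

private lemma eLpNorm_sqrt_eq {μ : Measure ℝ} {h : ℝ → ℝ}
    (hi : Integrable h μ) (hnn : 0 ≤ᵐ[μ] h) :
    eLpNorm (fun x => Real.sqrt (h x)) 2 μ = ENNReal.ofReal (Real.sqrt (∫ x, h x ∂μ)) := by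
  rw [eLpNorm_eq_lintegral_rpow_enorm_toReal two_ne_zero ENNReal.ofNat_ne_top]
  have heq : ∫⁻ x, ‖Real.sqrt (h x)‖ₑ ^ ((2:ℝ≥0∞).toReal) ∂μ
      = ∫⁻ x, ENNReal.ofReal (h x) ∂μ := by
    refine lintegral_congr_ae (hnn.mono fun x hx => ?_)
    beta_reduce
    rw [← ofReal_norm,
      ENNReal.ofReal_rpow_of_nonneg (norm_nonneg _) ENNReal.toReal_nonneg]
    congr 1
    rw [Real.norm_eq_abs, abs_of_nonneg (Real.sqrt_nonneg _)]
    rw [show ((2:ℝ≥0∞).toReal) = ((2:ℕ):ℝ) by norm_num, Real.rpow_natCast]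
    exact Real.sq_sqrt hx
  rw [heq, ← ofReal_integral_eq_lintegral_ofReal hi hnn,
    ENNReal.ofReal_rpow_of_nonneg (integral_nonneg_of_ae hnn) (by simp)]
  congr 1
  rw [Real.sqrt_eq_rpow]
  norm_num

private lemma rpow_half_integral_le {μ : Measure ℝ} {h : ℝ → ℝ} {b : ℝ} (hb : 0 ≤ b)
    (hN : eLpNorm h 2 μ ≤ ENNReal.ofReal b) :
    (∫ x, (h x)^2 ∂μ) ^ (1/2 : ℝ) ≤ b := by
  by_cases hint : Integrable (fun x => (h x)^2) μ
  · have key : ENNReal.ofReal (∫ x, (h x)^2 ∂μ) ≤ ENNReal.ofReal (b^2) := by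
      rw [ofReal_integral_eq_lintegral_ofReal hint (Filter.Eventually.of_forall fun x => sq_nonneg _)]
      have h2 : ∫⁻ x, ENNReal.ofReal ((h x)^2) ∂μ = (eLpNorm h 2 μ) ^ (2:ℝ) := by
        rw [eLpNorm_eq_lintegral_rpow_enorm_toReal two_ne_zero ENNReal.ofNat_ne_top,
          ← ENNReal.rpow_mul]
        rw [show (1 / (2:ℝ≥0∞).toReal * 2) = 1 by norm_num, ENNReal.rpow_one]
        refine lintegral_congr fun x => ?_
        rw [← ofReal_norm,
          ENNReal.ofReal_rpow_of_nonneg (norm_nonneg _) ENNReal.toReal_nonneg]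
        congr 1
        rw [Real.norm_eq_abs, show ((2:ℝ≥0∞).toReal) = ((2:ℕ):ℝ) by norm_num,
          Real.rpow_natCast, sq_abs]
      rw [h2]
      calc (eLpNorm h 2 μ) ^ (2:ℝ) ≤ (ENNReal.ofReal b) ^ (2:ℝ) :=
            ENNReal.rpow_le_rpow hN (by norm_num)
        _ = ENNReal.ofReal (b^2) := by
            rw [ENNReal.ofReal_rpow_of_nonneg hb (by norm_num)]
            congr 1
            rw [show ((2:ℝ)) = ((2:ℕ):ℝ) by norm_num, Real.rpow_natCast]
    have hle : ∫ x, (h x)^2 ∂μ ≤ b^2 :=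
      (ENNReal.ofReal_le_ofReal_iff (by positivity)).mp key
    calc (∫ x, (h x)^2 ∂μ) ^ (1/2:ℝ) = Real.sqrt (∫ x, (h x)^2 ∂μ) := by
          rw [Real.sqrt_eq_rpow]
      _ ≤ Real.sqrt (b^2) := Real.sqrt_le_sqrt hle
      _ = b := Real.sqrt_sq hb
  · rw [integral_undef hint, Real.zero_rpow (by norm_num)]
    exact hb

private lemma poly_contDiff (p : Polynomial ℝ) : ContDiff ℝ (⊤:ℕ∞) fun x => p.eval x := by
  induction p using Polynomial.induction_on with
  | C a => simpa using contDiff_const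
  | add p q hp hq => simpa using hp.add hq
  | monomial n a _ =>
      simpa [Polynomial.eval_mul, Polynomial.eval_pow] using
        (contDiff_const (c := a)).mul (contDiff_id.pow (n+1))

private lemma interval_to_Icc (F : ℝ → ℝ) :
    ∫ u in (0:ℝ)..1, F u = ∫ u in Icc (0:ℝ) 1, F u := by
  rw [intervalIntegral.integral_of_le zero_le_one, integral_Icc_eq_integral_Ioc]

set_option maxHeartbeats 1000000 in
/-- `Diff₊([0,1])` is dense in the monoid `Diff̄₊([0,1])` of absolutely continuous
nondecreasing surjections of `[0,1]` fixing the endpoints, for the metric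
`d(γ₁, γ₂) = ‖√(γ₁') − √(γ₂')‖_{L²}`: every generalized reparametrization `γ`
(with density `k ≥ 0` a.e.) is approximated arbitrarily well by smooth diffeomorphisms
`ψ` with strictly positive derivative, in the sense that
`‖√k − √(ψ')‖_{L²([0,1])} < ε`. -/
theorem diff_dense_in_gen_reparam (γ k : ℝ → ℝ)
    (hk : IntegrableOn k (Icc 0 1))
    (hknn : ∀ᵐ u ∂(volume.restrict (Icc (0:ℝ) 1)), 0 ≤ k u)
    (hγ0 : γ 0 = 0) (hγ1 : γ 1 = 1)
    (hγ : ∀ u ∈ Icc (0:ℝ) 1, γ u = ∫ y in (0:ℝ)..u, k y) :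
    ∀ ε > 0, ∃ ψ : ℝ → ℝ, ContDiff ℝ (⊤ : ℕ∞) ψ ∧ ψ 0 = 0 ∧ ψ 1 = 1 ∧
      (∀ u ∈ Icc (0:ℝ) 1, 0 < deriv ψ u) ∧ MapsTo ψ (Icc 0 1) (Icc 0 1) ∧
      (∫ u in (0:ℝ)..1, (Real.sqrt (k u) - Real.sqrt (deriv ψ u)) ^ 2) ^ (1/2 : ℝ) < ε := by
  intro ε hε
  set μ := volume.restrict (Icc (0:ℝ) 1) with hμdef
  have hprob : IsProbabilityMeasure μ := ⟨by simp [hμdef, Real.volume_Icc]⟩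
  have hknn' : 0 ≤ᵐ[μ] k := hknn
  have hkint : Integrable k μ := hk
  -- total mass one
  have hk1 : ∫ x, k x ∂μ = 1 := by
    have h1 := hγ 1 (by norm_num)
    rw [hγ1] at h1
    rw [hμdef, ← interval_to_Icc k]
    exact h1.symm
  set sk : ℝ → ℝ := fun u => Real.sqrt (k u) with hsk
  have hskm : AEStronglyMeasurable sk μ :=
    Real.continuous_sqrt.comp_aestronglyMeasurable hkint.1
  have hskN : eLpNorm sk 2 μ = 1 := by
    rw [hsk]
    rw [eLpNorm_sqrt_eq hkint hknn', hk1]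
    simp
  have hskmem : MemLp sk 2 μ := ⟨hskm, by rw [hskN]; exact ENNReal.one_lt_top⟩
  set ε₁ := ε / 12 with hε₁def
  have hε₁ : 0 < ε₁ := by positivity
  -- continuous approximation
  obtain ⟨g, -, hg_close, hg_cont, hg_mem⟩ :=
    hskmem.exists_hasCompactSupport_eLpNorm_sub_le ENNReal.ofNat_ne_top
      (ε := ENNReal.ofReal ε₁) (ENNReal.ofReal_pos.2 hε₁).ne'
  -- polynomial approximation
  obtain ⟨P, hP⟩ := exists_polynomial_near_of_continuousOn 0 1 g hg_cont.continuousOn ε₁ hε₁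
  set δ := ε₁ ^ 2 with hδdef
  have hδ : 0 < δ := by positivity
  set f : ℝ → ℝ := fun u => (P.eval u) ^ 2 + δ with hf
  have hf_cont : Continuous f := by
    exact (P.continuous.pow 2).add continuous_const
  have hf_pos : ∀ u, 0 < f u := fun u => add_pos_of_nonneg_of_pos (sq_nonneg _) hδ
  have hf_nn : 0 ≤ᵐ[μ] f := Filter.Eventually.of_forall fun u => (hf_pos u).le
  have hf_int : Integrable f μ := hf_cont.integrableOn_Icc
  obtain ⟨c, hcdef⟩ : ∃ c : ℝ, c = ∫ u in (0:ℝ)..1, f u := ⟨_, rfl⟩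
  have hc_eq : c = ∫ x, f x ∂μ := by
    rw [hcdef, hμdef]
    exact interval_to_Icc f
  have hc_pos : 0 < c := by
    have : (δ : ℝ) = ∫ _x, δ ∂μ := by simp
    have hle : ∫ _x, δ ∂μ ≤ ∫ x, f x ∂μ :=
      integral_mono (integrable_const δ) hf_int fun u => by
        simpa [hf] using sq_nonneg (P.eval u)
    rw [hc_eq]
    calc (0:ℝ) < δ := hδ
      _ = ∫ _x, δ ∂μ := this
      _ ≤ _ := hle
  obtain ⟨ψ, hψ⟩ : ∃ ψ : ℝ → ℝ, ψ = fun u => c⁻¹ * ∫ t in (0:ℝ)..u, f t := ⟨_, rfl⟩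
  have hψ0 : ψ 0 = 0 := by rw [hψ]; simp
  have hψ1 : ψ 1 = 1 := by
    simp only [hψ, ← hcdef]
    exact inv_mul_cancel₀ hc_pos.ne'
  have hderiv : ∀ u, HasDerivAt ψ (c⁻¹ * f u) u := by
    intro u
    rw [hψ]
    have h0 : HasDerivAt (fun v => ∫ t in (0:ℝ)..v, f t) (f u) u :=
      intervalIntegral.integral_hasDerivAt_right (hf_cont.intervalIntegrable _ _)
        (hf_cont.stronglyMeasurableAtFilter _ _) hf_cont.continuousAt
    exact h0.const_mul c⁻¹
  have hderiv' : deriv ψ = fun u => c⁻¹ * f u := funext fun u => (hderiv u).deriv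
  have hψpos : ∀ u, 0 < deriv ψ u := by
    rw [hderiv']
    exact fun u => mul_pos (inv_pos.2 hc_pos) (hf_pos u)
  have hψsmooth : ContDiff ℝ (⊤ : ℕ∞) ψ := by
    rw [contDiff_infty_iff_deriv]
    refine ⟨fun u => (hderiv u).differentiableAt, ?_⟩
    rw [hderiv']
    exact contDiff_const.mul (((poly_contDiff P).pow 2).add contDiff_const)
  have hψmono : StrictMono ψ := strictMono_of_deriv_pos hψpos
  have hmaps : MapsTo ψ (Icc 0 1) (Icc 0 1) := by
    intro u hu
    constructor
    · rw [← hψ0]; exact hψmono.monotone hu.1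
    · rw [← hψ1]; exact hψmono.monotone hu.2
  -- analysis
  set sf : ℝ → ℝ := fun u => Real.sqrt (f u) with hsf
  have hsfm : AEStronglyMeasurable sf μ :=
    (Real.continuous_sqrt.comp hf_cont).aestronglyMeasurable
  set aP : ℝ → ℝ := fun u => |P.eval u| with haP
  have haPm : AEStronglyMeasurable aP μ := (P.continuous.abs).aestronglyMeasurable
  set rc := Real.sqrt c with hrc
  have hrc_pos : 0 < rc := Real.sqrt_pos.2 hc_pos
  have hsfN : eLpNorm sf 2 μ = ENNReal.ofReal rc := by
    rw [hsf, eLpNorm_sqrt_eq hf_int hf_nn, ← hc_eq]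
  -- bound 1 : ‖sk - aP‖ ≤ 2ε₁
  have hB1 : eLpNorm (fun u => sk u - aP u) 2 μ ≤ ENNReal.ofReal ε₁ + ENNReal.ofReal ε₁ := by
    have hptwise : ∀ᵐ u ∂μ, ‖sk u - aP u‖ ≤ ‖|sk u - g u| + ε₁‖ := by
      filter_upwards [ae_restrict_mem measurableSet_Icc] with u hu
      have hsknn : 0 ≤ sk u := Real.sqrt_nonneg _
      have h1 : |sk u - aP u| ≤ |sk u - g u| + |g u - P.eval u| := by
        have e0 : aP u = |P.eval u| := rfl
        have e1 : |sk u - aP u| ≤ |sk u - P.eval u| := by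
          rw [e0, show sk u - |P.eval u| = |sk u| - |P.eval u| by rw [abs_of_nonneg hsknn]]
          exact abs_abs_sub_abs_le_abs_sub _ _
        refine e1.trans ?_
        calc |sk u - P.eval u| = |(sk u - g u) + (g u - P.eval u)| := by
              rw [sub_add_sub_cancel]
          _ ≤ |sk u - g u| + |g u - P.eval u| := abs_add_le _ _
      have h2 : |g u - P.eval u| ≤ ε₁ := by
        rw [abs_sub_comm]; exact (hP u hu).le
      have h3 : (0:ℝ) ≤ |sk u - g u| + ε₁ := by positivity
      rw [Real.norm_eq_abs, Real.norm_eq_abs, abs_of_nonneg h3]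
      linarith
    calc eLpNorm (fun u => sk u - aP u) 2 μ
        ≤ eLpNorm (fun u => |sk u - g u| + ε₁) 2 μ := eLpNorm_mono_ae hptwise
      _ ≤ eLpNorm (fun u => |sk u - g u|) 2 μ + eLpNorm (fun _ => ε₁) 2 μ := by
          exact eLpNorm_add_le ((hskm.sub hg_mem.1).norm) aestronglyMeasurable_const one_le_two
      _ ≤ ENNReal.ofReal ε₁ + ENNReal.ofReal ε₁ := by
          have hA : eLpNorm (fun u => |sk u - g u|) 2 μ ≤ ENNReal.ofReal ε₁ := by
            calc eLpNorm (fun u => |sk u - g u|) 2 μ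
                = eLpNorm (fun u => sk u - g u) 2 μ := by
                  simpa [Real.norm_eq_abs] using
                    eLpNorm_norm (μ := μ) (p := (2:ℝ≥0∞)) (fun u => sk u - g u)
              _ = eLpNorm (sk - g) 2 μ := rfl
              _ ≤ ENNReal.ofReal ε₁ := hg_close
          have hB : eLpNorm (fun _ : ℝ => ε₁) 2 μ ≤ ENNReal.ofReal ε₁ := by
            calc eLpNorm (fun _ : ℝ => ε₁) 2 μ
                ≤ μ univ ^ (2:ℝ≥0∞).toReal⁻¹ * ENNReal.ofReal ε₁ :=
                  eLpNorm_le_of_ae_bound (Filter.Eventually.of_forall fun u => by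
                    rw [Real.norm_eq_abs, abs_of_pos hε₁])
              _ = ENNReal.ofReal ε₁ := by simp
          exact add_le_add hA hB
  -- bound 2 : ‖aP - sf‖ ≤ ε₁
  have hB2 : eLpNorm (fun u => aP u - sf u) 2 μ ≤ ENNReal.ofReal ε₁ := by
    have hbd : ∀ᵐ u ∂μ, ‖aP u - sf u‖ ≤ ε₁ := by
      refine Filter.Eventually.of_forall fun u => ?_
      have h0 : aP u = Real.sqrt ((P.eval u)^2) := by
        rw [Real.sqrt_sq_eq_abs]
      have h1 : aP u ≤ sf u := by
        rw [h0, hsf]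
        exact Real.sqrt_le_sqrt (by simp [hf, hδ.le])
      have h2 : sf u ≤ aP u + ε₁ := by
        rw [h0, hsf]
        calc Real.sqrt ((P.eval u)^2 + δ)
            ≤ Real.sqrt ((P.eval u)^2) + Real.sqrt δ := sqrt_add_le' (sq_nonneg _) hδ.le
          _ = Real.sqrt ((P.eval u)^2) + ε₁ := by
              rw [hδdef, Real.sqrt_sq hε₁.le]
      rw [Real.norm_eq_abs, abs_sub_comm, abs_of_nonneg (by linarith)]
      linarith
    calc eLpNorm (fun u => aP u - sf u) 2 μ
        ≤ μ univ ^ (2:ℝ≥0∞).toReal⁻¹ * ENNReal.ofReal ε₁ := eLpNorm_le_of_ae_bound hbd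
      _ = ENNReal.ofReal ε₁ := by
          simp
  -- bound 3 : ‖sk - sf‖ ≤ 3ε₁
  have hB3 : eLpNorm (fun u => sk u - sf u) 2 μ ≤ ENNReal.ofReal (3 * ε₁) := by
    have hsplit : (fun u => sk u - sf u)
        = (fun u => sk u - aP u) + (fun u => aP u - sf u) := by
      funext u; simp [sub_add_sub_cancel]
    calc eLpNorm (fun u => sk u - sf u) 2 μ
        ≤ eLpNorm (fun u => sk u - aP u) 2 μ + eLpNorm (fun u => aP u - sf u) 2 μ := by
          rw [hsplit]
          exact eLpNorm_add_le (hskm.sub haPm) (haPm.sub hsfm) one_le_two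
      _ ≤ (ENNReal.ofReal ε₁ + ENNReal.ofReal ε₁) + ENNReal.ofReal ε₁ := by
          gcongr
      _ = ENNReal.ofReal (3 * ε₁) := by
          rw [← ENNReal.ofReal_add hε₁.le hε₁.le, ← ENNReal.ofReal_add (by positivity) hε₁.le]
          ring_nf
  -- rc close to 1
  have hrc_bound : |rc - 1| ≤ 3 * ε₁ := by
    have hub : rc ≤ 1 + 3 * ε₁ := by
      have : ENNReal.ofReal rc ≤ ENNReal.ofReal 1 + ENNReal.ofReal (3 * ε₁) := by
        rw [← hsfN]
        calc eLpNorm sf 2 μ = eLpNorm (sk - (fun u => sk u - sf u)) 2 μ := by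
              congr 1; funext u; simp
          _ ≤ eLpNorm sk 2 μ + eLpNorm (fun u => sk u - sf u) 2 μ :=
              eLpNorm_sub_le hskm (hskm.sub hsfm) one_le_two
          _ ≤ eLpNorm sk 2 μ + ENNReal.ofReal (3 * ε₁) := add_le_add_right hB3 _
          _ = ENNReal.ofReal 1 + ENNReal.ofReal (3 * ε₁) := by
              rw [hskN, ENNReal.ofReal_one]
      rw [← ENNReal.ofReal_add (by norm_num) (by positivity)] at this
      exact (ENNReal.ofReal_le_ofReal_iff (by positivity)).1 this
    have hlb : 1 ≤ rc + 3 * ε₁ := by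
      have : ENNReal.ofReal 1 ≤ ENNReal.ofReal rc + ENNReal.ofReal (3 * ε₁) := by
        rw [← hsfN]
        have h1 : (ENNReal.ofReal 1 : ℝ≥0∞) = eLpNorm sk 2 μ := by
          rw [hskN, ENNReal.ofReal_one]
        rw [h1]
        calc eLpNorm sk 2 μ = eLpNorm (sf + (fun u => sk u - sf u)) 2 μ := by
              congr 1; funext u; simp
          _ ≤ eLpNorm sf 2 μ + eLpNorm (fun u => sk u - sf u) 2 μ :=
              eLpNorm_add_le hsfm (hskm.sub hsfm) one_le_two
          _ ≤ eLpNorm sf 2 μ + ENNReal.ofReal (3 * ε₁) := add_le_add_right hB3 _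
      rw [← ENNReal.ofReal_add hrc_pos.le (by positivity)] at this
      exact (ENNReal.ofReal_le_ofReal_iff (by positivity)).1 this
    rw [abs_le]
    constructor <;> linarith
  -- final bound
  have hsqrt_deriv : ∀ u, Real.sqrt (deriv ψ u) = rc⁻¹ * sf u := by
    intro u
    rw [hderiv']
    beta_reduce
    rw [Real.sqrt_mul (inv_nonneg.2 hc_pos.le) (f u), Real.sqrt_inv, hrc, hsf]
  have hkey : eLpNorm (fun u => sk u - Real.sqrt (deriv ψ u)) 2 μ
      ≤ ENNReal.ofReal (6 * ε₁) := by
    have hsplit : (fun u => sk u - Real.sqrt (deriv ψ u))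
        = (fun u => sk u - sf u) + (1 - rc⁻¹) • sf := by
      funext u
      simp only [Pi.add_apply, Pi.smul_apply, smul_eq_mul, hsqrt_deriv u]
      ring
    calc eLpNorm (fun u => sk u - Real.sqrt (deriv ψ u)) 2 μ
        ≤ eLpNorm (fun u => sk u - sf u) 2 μ
          + eLpNorm ((1 - rc⁻¹) • sf) 2 μ := by
          rw [hsplit]
          exact eLpNorm_add_le (hskm.sub hsfm) (hsfm.const_smul _) one_le_two
      _ ≤ ENNReal.ofReal (3 * ε₁) + ENNReal.ofReal (3 * ε₁) := by
          refine add_le_add hB3 ?_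
          calc eLpNorm ((1 - rc⁻¹) • sf) 2 μ
              = ‖(1 - rc⁻¹)‖ₑ * eLpNorm sf 2 μ := eLpNorm_const_smul _ _ _ _
            _ = ENNReal.ofReal |1 - rc⁻¹| * ENNReal.ofReal rc := by
                rw [hsfN, ← ofReal_norm, Real.norm_eq_abs]
            _ = ENNReal.ofReal (|1 - rc⁻¹| * rc) := by
                rw [ENNReal.ofReal_mul (abs_nonneg _)]
            _ ≤ ENNReal.ofReal (3 * ε₁) := by
                apply ENNReal.ofReal_le_ofReal
                have h2 : (1 - rc⁻¹) * rc = rc - 1 := by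
                  field_simp
                have h3 : |1 - rc⁻¹| * rc = |rc - 1| := by
                  calc |1 - rc⁻¹| * rc = |1 - rc⁻¹| * |rc| := by rw [abs_of_pos hrc_pos]
                    _ = |(1 - rc⁻¹) * rc| := (abs_mul _ _).symm
                    _ = |rc - 1| := by rw [h2]
                rw [h3]
                exact hrc_bound
      _ = ENNReal.ofReal (6 * ε₁) := by
          rw [← ENNReal.ofReal_add (by positivity) (by positivity)]
          ring_nf
  refine ⟨ψ, hψsmooth, hψ0, hψ1, fun u _ => hψpos u, hmaps, ?_⟩
  have hconv : ∫ u in (0:ℝ)..1, (Real.sqrt (k u) - Real.sqrt (deriv ψ u)) ^ 2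
      = ∫ u, (sk u - Real.sqrt (deriv ψ u)) ^ 2 ∂μ := by
    rw [hμdef]
    exact interval_to_Icc fun u => (Real.sqrt (k u) - Real.sqrt (deriv ψ u)) ^ 2
  rw [hconv]
  have hfin : (∫ u, (sk u - Real.sqrt (deriv ψ u)) ^ 2 ∂μ) ^ (1/2 : ℝ) ≤ 6 * ε₁ :=
    rpow_half_integral_le (by linarith) hkey
  calc (∫ u, (sk u - Real.sqrt (deriv ψ u)) ^ 2 ∂μ) ^ (1/2 : ℝ) ≤ 6 * ε₁ := hfin
    _ < ε := by rw [hε₁def]; linarith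
end
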